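/- Let L be a complete lattice. L is completely distributive in the constructive sense (i.e., the map sending a downset to its supremum has a left adjoint) if and only if for every b ∈ L, b = sSup { a | a ⋘ b }, where ⋘ is the totally-below relation. -/

import Mathlib

def TotallyBelow {L : Type*} [CompleteLattice L] (a b : L) : Prop :=
  ∀ S : Set L, b ≤ sSup S → ∃ s ∈ S, a ≤ s

/-- Constructive complete distributivity: the map sending a downset to its
supremum has a left adjoint. -/
def CompletelyDistributive (L : Type*) [CompleteLattice L] : Prop :=
  ∃ t : L → LowerSet L, Monotone t ∧
    ∀ (a : L) (D : LowerSet L), t a ≤ D ↔ a ≤ sSup (D : Set L)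

theorem completelyDistributive_iff_totallyContinuous {L : Type*} [CompleteLattice L] :
    CompletelyDistributive L ↔ ∀ b : L, b = sSup { a | TotallyBelow a b } := by
  constructor
  · rintro ⟨t, -, ht⟩ b
    apply le_antisymm
    · have hb : b ≤ sSup ((t b : Set L)) := (ht b (t b)).mp le_rfl
      refine hb.trans (sSup_le_sSup ?_)
      intro a ha S hS
      have hsup : sSup ((lowerClosure S : LowerSet L) : Set L) = sSup S := by
        apply le_antisymm
        · apply sSup_le
          intro x hx
          obtain ⟨s, hs, hxs⟩ := hx
          exact hxs.trans (le_sSup hs)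
        · exact sSup_le_sSup (subset_lowerClosure (s := S))
      have : t b ≤ lowerClosure S := (ht b (lowerClosure S)).mpr (by rwa [hsup])
      have := this ha
      exact mem_lowerClosure.mp this
    · apply sSup_le
      intro a ha
      obtain ⟨s, hs, has⟩ := ha {b} (by simp)
      simpa [hs.symm] using has  -- hs : s ∈ {b}
    -- done
  · intro h
    refine ⟨fun b => ⟨{ a | TotallyBelow a b }, ?_⟩, ?_, ?_⟩
    · intro x y hyx hx S hS
      obtain ⟨s, hs, hxs⟩ := hx S hS
      exact ⟨s, hs, hyx.trans hxs⟩
    · intro b b' hbb' a ha S hS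
      exact ha S (hbb'.trans hS)
    · intro a D
      constructor
      · intro hle
        calc a = sSup { x | TotallyBelow x a } := h a
          _ ≤ sSup (D : Set L) := sSup_le_sSup hle
      · intro ha x hx
        obtain ⟨s, hs, hxs⟩ := hx (D : Set L) ha
        exact D.lower hxs hs
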